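/- Let R > 0 and define γ : ℝ → ℍ by γ(θ) = (sinh R)·sin θ + ((cosh R) − (sinh R)·cos θ)·i, the Euclidean-circle parametrization of the hyperbolic circle of radius R centered at i ∈ ℍ (note Im γ(θ) = cosh R − sinh R·cos θ > 0). Then the hyperbolic length of this circle, measured as the metric variation eVariationOn γ (Set.Icc 0 (2π)) with respect to the hyperbolic metric of ℍ, equals ENNReal.ofReal (2π·sinh R). -/

import Mathlib

set_option pp.deepTerms true
set_option maxHeartbeats 1000000

open scoped UpperHalfPlane Real

open Real Set Filter Topology
open scoped ENNReal

section Aux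

variable {a b : ℝ}

/-- The hyperbolic angle corresponding to the Euclidean parameter `θ` on the circle. -/
noncomputable def hypAngle (a b θ : ℝ) : ℝ :=
  θ + 2 * Real.arctan (b * Real.sin θ / (a + 1 - b * Real.cos θ))

lemma hb_lt_a (hb : 0 < b) (ha : 0 < a) (hab : a ^ 2 = 1 + b ^ 2) : b < a := by
  nlinarith

lemma hP_pos (hb : 0 < b) (ha : 0 < a) (hab : a ^ 2 = 1 + b ^ 2) (θ : ℝ) :
    0 < a + 1 - b * Real.cos θ := by
  nlinarith [Real.cos_le_one θ, Real.neg_one_le_cos θ, hb_lt_a hb ha hab]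

lemma hI_pos (hb : 0 < b) (ha : 0 < a) (hab : a ^ 2 = 1 + b ^ 2) (θ : ℝ) :
    0 < a - b * Real.cos θ := by
  nlinarith [Real.cos_le_one θ, Real.neg_one_le_cos θ, hb_lt_a hb ha hab]

lemma key_poly (a b sx cx sy cy : ℝ) (hx : sx ^ 2 + cx ^ 2 = 1) (hy : sy ^ 2 + cy ^ 2 = 1)
    (hab : a ^ 2 = 1 + b ^ 2) :
    (sx * cy - cx * sy) *
        ((a + 1 - b * (1 - 2 * sx ^ 2)) * (a + 1 - b * (1 - 2 * sy ^ 2)) +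
          b ^ 2 * (2 * sx * cx) * (2 * sy * cy)) +
      (cx * cy + sx * sy) *
        (b * ((2 * sx * cx) * (a + 1 - b * (1 - 2 * sy ^ 2)) -
          (2 * sy * cy) * (a + 1 - b * (1 - 2 * sx ^ 2)))) =
    2 * (a + 1) * (sx * cy - cx * sy) := by
  linear_combination (2 * b * sx * cy - 2 * b ^ 2 * sx * cy + 2 * a * b * sx * cy) * hx +
    (-2 * b * cx * sy + 2 * b ^ 2 * cx * sy - 2 * a * b * cx * sy) * hy +
    (sx * cy - cx * sy) * hab

lemma one_add_w_sq (hb : 0 < b) (ha : 0 < a) (hab : a ^ 2 = 1 + b ^ 2) (θ : ℝ) :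
    1 + (b * Real.sin θ / (a + 1 - b * Real.cos θ)) ^ 2 =
      2 * (a + 1) * (a - b * Real.cos θ) / (a + 1 - b * Real.cos θ) ^ 2 := by
  have hP := hP_pos hb ha hab θ
  field_simp
  linear_combination b ^ 2 * Real.sin_sq_add_cos_sq θ - hab

lemma half_sin (s : ℝ) : Real.sin s = 2 * Real.sin (s / 2) * Real.cos (s / 2) := by
  have := Real.sin_two_mul (s / 2)
  rw [show 2 * (s / 2) = s by ring] at this
  linarith

lemma half_cos (s : ℝ) : Real.cos s = 1 - 2 * Real.sin (s / 2) ^ 2 := by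
  have h := Real.cos_two_mul (s / 2)
  rw [show 2 * (s / 2) = s by ring] at h
  have h2 := Real.sin_sq_add_cos_sq (s / 2)
  nlinarith

lemma key_eq (hb : 0 < b) (ha : 0 < a) (hab : a ^ 2 = 1 + b ^ 2) (s t : ℝ) :
    Real.sin ((hypAngle a b s - hypAngle a b t) / 2) *
      (Real.sqrt (a - b * Real.cos s) * Real.sqrt (a - b * Real.cos t)) =
    Real.sin ((s - t) / 2) := by
  have hPs := hP_pos hb ha hab s
  have hPt := hP_pos hb ha hab t
  have hIs := hI_pos hb ha hab s
  have hIt := hI_pos hb ha hab t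
  have hc2 : Real.sqrt (2 * (a + 1)) ^ 2 = 2 * (a + 1) := Real.sq_sqrt (by positivity)
  have hc0 : 0 < Real.sqrt (2 * (a + 1)) := Real.sqrt_pos.2 (by positivity)
  have hu0 : 0 < Real.sqrt (a - b * Real.cos s) := Real.sqrt_pos.2 hIs
  have hv0 : 0 < Real.sqrt (a - b * Real.cos t) := Real.sqrt_pos.2 hIt
  have hu2 : Real.sqrt (a - b * Real.cos s) ^ 2 = a - b * Real.cos s := Real.sq_sqrt hIs.le
  have hv2 : Real.sqrt (a - b * Real.cos t) ^ 2 = a - b * Real.cos t := Real.sq_sqrt hIt.le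
  set c := Real.sqrt (2 * (a + 1))
  set u := Real.sqrt (a - b * Real.cos s)
  set v := Real.sqrt (a - b * Real.cos t)
  set ws : ℝ := b * Real.sin s / (a + 1 - b * Real.cos s) with hws
  set wt : ℝ := b * Real.sin t / (a + 1 - b * Real.cos t) with hwt
  have hsqs : Real.sqrt (1 + ws ^ 2) = c * u / (a + 1 - b * Real.cos s) := by
    have h : 1 + ws ^ 2 = (c * u / (a + 1 - b * Real.cos s)) ^ 2 := by
      rw [hws, one_add_w_sq hb ha hab s, div_pow, mul_pow, hc2, hu2]
    rw [h]
    exact Real.sqrt_sq (by positivity)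
  have hsqt : Real.sqrt (1 + wt ^ 2) = c * v / (a + 1 - b * Real.cos t) := by
    have h : 1 + wt ^ 2 = (c * v / (a + 1 - b * Real.cos t)) ^ 2 := by
      rw [hwt, one_add_w_sq hb ha hab t, div_pow, mul_pow, hc2, hv2]
    rw [h]
    exact Real.sqrt_sq (by positivity)
  have hsplit : (hypAngle a b s - hypAngle a b t) / 2 =
      (s / 2 - t / 2) + (Real.arctan ws - Real.arctan wt) := by
    simp only [hypAngle]; ring
  have hcs : Real.cos (Real.arctan ws) = (a + 1 - b * Real.cos s) / (c * u) := by
    rw [Real.cos_arctan, hsqs, one_div, inv_div]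
  have hct : Real.cos (Real.arctan wt) = (a + 1 - b * Real.cos t) / (c * v) := by
    rw [Real.cos_arctan, hsqt, one_div, inv_div]
  have hss' : Real.sin (Real.arctan ws) = b * Real.sin s / (c * u) := by
    rw [Real.sin_arctan, hsqs, div_div_eq_mul_div, hws, div_mul_cancel₀ _ hPs.ne']
  have hst' : Real.sin (Real.arctan wt) = b * Real.sin t / (c * v) := by
    rw [Real.sin_arctan, hsqt, div_div_eq_mul_div, hwt, div_mul_cancel₀ _ hPt.ne']
  have hu2' := hu2
  rw [half_cos s] at hu2'
  have hv2' := hv2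
  rw [half_cos t] at hv2'
  have hsinA : Real.sin (Real.arctan ws - Real.arctan wt) =
      (b * Real.sin s / (c * u)) * ((a + 1 - b * Real.cos t) / (c * v)) -
        ((a + 1 - b * Real.cos s) / (c * u)) * (b * Real.sin t / (c * v)) := by
    rw [Real.sin_sub, hcs, hct, hss', hst']
  have hcosA : Real.cos (Real.arctan ws - Real.arctan wt) =
      ((a + 1 - b * Real.cos s) / (c * u)) * ((a + 1 - b * Real.cos t) / (c * v)) +
        (b * Real.sin s / (c * u)) * (b * Real.sin t / (c * v)) := by
    rw [Real.cos_sub, hcs, hct, hss', hst']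
  rw [hsplit, Real.sin_add, hsinA, hcosA, show (s - t) / 2 = s / 2 - t / 2 by ring,
    Real.sin_sub (s/2) (t/2), Real.cos_sub (s/2) (t/2)]
  rw [half_sin s, half_cos s, half_sin t, half_cos t]
  field_simp [hc0.ne', hu0.ne', hv0.ne']
  linear_combination key_poly a b (Real.sin (s/2)) (Real.cos (s/2)) (Real.sin (t/2))
      (Real.cos (t/2)) (Real.sin_sq_add_cos_sq _) (Real.sin_sq_add_cos_sq _) hab -
    (Real.sin (s/2) * Real.cos (t/2) - Real.cos (s/2) * Real.sin (t/2)) * hc2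

lemma hypAngle_hasDerivAt (hb : 0 < b) (ha : 0 < a) (hab : a ^ 2 = 1 + b ^ 2) (x : ℝ) :
    HasDerivAt (hypAngle a b) ((a - b * Real.cos x)⁻¹) x := by
  have hP := hP_pos hb ha hab x
  have hI := hI_pos hb ha hab x
  have h1 : HasDerivAt (fun θ => b * Real.sin θ) (b * Real.cos x) x :=
    (Real.hasDerivAt_sin x).const_mul b
  have h2 : HasDerivAt (fun θ => a + 1 - b * Real.cos θ) (b * Real.sin x) x := by
    have h := ((Real.hasDerivAt_cos x).const_mul b).const_sub (a + 1)
    refine h.congr_deriv ?_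
    ring
  have h3 := h1.div h2 hP.ne'
  have h4 := (h3.arctan.const_mul (2 : ℝ))
  have h5 := (hasDerivAt_id x).add h4
  refine h5.congr_deriv ?_
  symm
  rw [Pi.div_apply, one_add_w_sq hb ha hab x]
  field_simp
  linear_combination b ^ 2 * Real.sin_sq_add_cos_sq x - hab

lemma hypAngle_strictMono (hb : 0 < b) (ha : 0 < a) (hab : a ^ 2 = 1 + b ^ 2) :
    StrictMono (hypAngle a b) := by
  apply strictMono_of_deriv_pos
  intro x
  rw [(hypAngle_hasDerivAt hb ha hab x).deriv]
  exact inv_pos.2 (hI_pos hb ha hab x)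

lemma hypAngle_zero : hypAngle a b 0 = 0 := by
  simp [hypAngle]

lemma hypAngle_two_pi : hypAngle a b (2 * π) = 2 * π := by
  simp [hypAngle, Real.sin_two_pi]

lemma abs_sin_le_abs' (x : ℝ) : |Real.sin x| ≤ |x| := by
  have h : ∀ y : ℝ, 0 ≤ y → |Real.sin y| ≤ y := by
    intro y hy
    rcases le_total y 1 with h1 | h1
    · rw [abs_of_nonneg (Real.sin_nonneg_of_nonneg_of_le_pi hy
        (h1.trans (by nlinarith [Real.pi_gt_three])))]
      exact Real.sin_le hy
    · exact (Real.abs_sin_le_one y).trans h1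
  rcases le_total 0 x with hx | hx
  · rw [abs_of_nonneg hx]; exact h x hx
  · rw [abs_of_nonpos hx, ← abs_neg (Real.sin x), ← Real.sin_neg]
    exact h (-x) (neg_nonneg.2 hx)

lemma arsinh_le_self' {x : ℝ} (hx : 0 ≤ x) : Real.arsinh x ≤ x := by
  rw [← Real.sinh_le_sinh, Real.sinh_arsinh]
  exact Real.self_le_sinh_iff.2 hx

end Aux

/-- The hyperbolic length (total metric variation) of the hyperbolic circle of radius
`R > 0` centered at `i ∈ ℍ`, parametrized as the Euclidean circle of radius `sinh R`
centered at `(cosh R)·i`, equals `2π·sinh R`. -/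
theorem stmt_5 (R : ℝ) (hR : 0 < R) (γ : ℝ → ℍ)
    (hγ : ∀ θ : ℝ, (γ θ : ℂ) =
      Real.sinh R * Real.sin θ + (Real.cosh R - Real.sinh R * Real.cos θ) * Complex.I) :
    eVariationOn γ (Set.Icc 0 (2 * π)) = ENNReal.ofReal (2 * π * Real.sinh R) := by
  set a := Real.cosh R with ha_def
  set b := Real.sinh R with hb_def
  have hb : 0 < b := Real.sinh_pos_iff.2 hR
  have ha : 0 < a := Real.cosh_pos R
  have hab : a ^ 2 = 1 + b ^ 2 := by rw [ha_def, hb_def, Real.cosh_sq]; ring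
  have hπ : 0 < π := Real.pi_pos
  -- imaginary parts
  have him : ∀ θ : ℝ, (γ θ).im = a - b * Real.cos θ := by
    intro θ
    have h := congrArg Complex.im (hγ θ)
    rw [UpperHalfPlane.coe_im] at h
    simpa [Complex.cos_ofReal_re] using h
  -- Euclidean distance between points
  have habs : ∀ s t : ℝ, dist ((γ s : ℂ)) ((γ t : ℂ)) = 2 * b * |Real.sin ((s - t) / 2)| := by
    intro s t
    rw [Complex.dist_eq, hγ s, hγ t]
    have h2 : (↑b * ↑(Real.sin s) + (↑a - ↑b * ↑(Real.cos s)) * Complex.I) -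
        (↑b * ↑(Real.sin t) + (↑a - ↑b * ↑(Real.cos t)) * Complex.I) =
        Complex.ofReal (b * (Real.sin s - Real.sin t)) +
          Complex.ofReal (b * (Real.cos t - Real.cos s)) * Complex.I := by
      push_cast; ring
    rw [h2, Complex.norm_add_mul_I]
    have hsq : Real.sin ((s - t) / 2) ^ 2 = (1 - Real.cos (s - t)) / 2 := by
      have := half_cos (s - t); linarith
    have hident : (b * (Real.sin s - Real.sin t)) ^ 2 + (b * (Real.cos t - Real.cos s)) ^ 2 =
        (2 * b * Real.sin ((s - t) / 2)) ^ 2 := by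
      linear_combination (-(4 * b ^ 2)) * hsq + (2 * b ^ 2) * Real.cos_sub s t +
        b ^ 2 * Real.sin_sq_add_cos_sq s + b ^ 2 * Real.sin_sq_add_cos_sq t
    rw [hident, Real.sqrt_sq_eq_abs, abs_mul, abs_of_nonneg (by positivity : (0:ℝ) ≤ 2 * b)]
  -- the hyperbolic distance formula
  have hdist : ∀ s t : ℝ, dist (γ s) (γ t) =
      2 * Real.arsinh (b * |Real.sin ((hypAngle a b s - hypAngle a b t) / 2)|) := by
    intro s t
    have hIs := hI_pos hb ha hab s
    have hIt := hI_pos hb ha hab t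
    have hu0 : 0 < Real.sqrt (a - b * Real.cos s) := Real.sqrt_pos.2 hIs
    have hv0 : 0 < Real.sqrt (a - b * Real.cos t) := Real.sqrt_pos.2 hIt
    rw [UpperHalfPlane.dist_eq]
    congr 1
    congr 1
    rw [habs, him s, him t, Real.sqrt_mul hIs.le]
    have hkey := key_eq hb ha hab s t
    have habs_key : |Real.sin ((s - t) / 2)| =
        |Real.sin ((hypAngle a b s - hypAngle a b t) / 2)| *
          (Real.sqrt (a - b * Real.cos s) * Real.sqrt (a - b * Real.cos t)) := by
      rw [← hkey, abs_mul, abs_of_nonneg (by positivity :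
        (0:ℝ) ≤ Real.sqrt (a - b * Real.cos s) * Real.sqrt (a - b * Real.cos t))]
    rw [habs_key]
    field_simp
  -- the per-pair upper bound
  have hmono := (hypAngle_strictMono hb ha hab).monotone
  have pair_le : ∀ s t : ℝ, s ≤ t →
      dist (γ s) (γ t) ≤ b * hypAngle a b t - b * hypAngle a b s := by
    intro s t hst
    rw [hdist s t]
    have h0 : (0:ℝ) ≤ b * |Real.sin ((hypAngle a b s - hypAngle a b t) / 2)| := by positivity
    have h1 := arsinh_le_self' h0
    have h2 : |Real.sin ((hypAngle a b s - hypAngle a b t) / 2)| ≤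
        (hypAngle a b t - hypAngle a b s) / 2 := by
      refine (abs_sin_le_abs' _).trans ?_
      have hxy := hmono hst
      rw [abs_of_nonpos (by linarith : (hypAngle a b s - hypAngle a b t) / 2 ≤ 0)]
      linarith
    nlinarith [h1, h2, hb.le, mul_le_mul_of_nonneg_left h2 hb.le]
  -- Upper bound
  have upper : eVariationOn γ (Set.Icc 0 (2 * π)) ≤ ENNReal.ofReal (2 * π * b) := by
    unfold eVariationOn
    apply iSup_le
    rintro ⟨n, u, hu, us⟩
    calc
      ∑ i ∈ Finset.range n, edist (γ (u (i + 1))) (γ (u i)) ≤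
          ∑ i ∈ Finset.range n,
            ENNReal.ofReal (b * hypAngle a b (u (i + 1)) - b * hypAngle a b (u i)) := by
        apply Finset.sum_le_sum
        intro i _
        rw [edist_dist, dist_comm]
        exact ENNReal.ofReal_le_ofReal (pair_le (u i) (u (i + 1)) (hu (Nat.le_succ i)))
      _ = ENNReal.ofReal (∑ i ∈ Finset.range n,
            (b * hypAngle a b (u (i + 1)) - b * hypAngle a b (u i))) := by
        refine (ENNReal.ofReal_sum_of_nonneg fun i _ => ?_).symm
        have h := mul_le_mul_of_nonneg_left (hmono (hu (Nat.le_succ i))) hb.le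
        linarith
      _ = ENNReal.ofReal (b * hypAngle a b (u n) - b * hypAngle a b (u 0)) := by
        rw [Finset.sum_range_sub (fun i => b * hypAngle a b (u i))]
      _ ≤ ENNReal.ofReal (2 * π * b) := by
        apply ENNReal.ofReal_le_ofReal
        have h1 : hypAngle a b (u n) ≤ 2 * π := by
          have := hmono (us n).2
          rwa [hypAngle_two_pi] at this
        have h2 : (0:ℝ) ≤ hypAngle a b (u 0) := by
          have := hmono (us 0).1
          rwa [hypAngle_zero] at this
        nlinarith [hb.le]
  -- Lower bound
  have hcont : Continuous (hypAngle a b) :=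
    Differentiable.continuous fun x => (hypAngle_hasDerivAt hb ha hab x).differentiableAt
  have lower : ENNReal.ofReal (2 * π * b) ≤ eVariationOn γ (Set.Icc 0 (2 * π)) := by
    have hVn : ∀ n : ℕ, 1 ≤ n →
        ENNReal.ofReal ((n : ℝ) * (2 * Real.arsinh (b * Real.sin (π / n)))) ≤
          eVariationOn γ (Set.Icc 0 (2 * π)) := by
      intro n hn
      have hn0 : (0:ℝ) < n := by exact_mod_cast hn
      have hsurj : ∀ y ∈ Set.Icc (0:ℝ) (2 * π), ∃ x ∈ Set.Icc (0:ℝ) (2 * π),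
          hypAngle a b x = y := by
        intro y hy
        have h := intermediate_value_Icc (by positivity : (0:ℝ) ≤ 2 * π) hcont.continuousOn
        rw [hypAngle_zero, hypAngle_two_pi] at h
        obtain ⟨x, hx, hxy⟩ := h hy
        exact ⟨x, hx, hxy⟩
      set u : ℕ → ℝ :=
        fun k => Function.invFunOn (hypAngle a b) (Set.Icc 0 (2 * π)) (2 * π * (min k n) / n)
        with hu_def
      have hmem : ∀ k : ℕ, 2 * π * ((min k n : ℕ) : ℝ) / n ∈ Set.Icc (0:ℝ) (2 * π) := by
        intro k
        constructor
        · positivity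
        · rw [div_le_iff₀ hn0]
          have : ((min k n : ℕ) : ℝ) ≤ (n : ℝ) := by exact_mod_cast min_le_right k n
          nlinarith
      have hex : ∀ k : ℕ, ∃ x ∈ Set.Icc (0:ℝ) (2 * π),
          hypAngle a b x = 2 * π * ((min k n : ℕ) : ℝ) / n := fun k => hsurj _ (hmem k)
      have huval : ∀ k : ℕ, hypAngle a b (u k) = 2 * π * ((min k n : ℕ) : ℝ) / n :=
        fun k => Function.invFunOn_eq (hex k)
      have humem : ∀ k : ℕ, u k ∈ Set.Icc (0:ℝ) (2 * π) :=
        fun k => Function.invFunOn_mem (hex k)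
      have humono : Monotone u := by
        intro k l hkl
        have hle : hypAngle a b (u k) ≤ hypAngle a b (u l) := by
          rw [huval, huval]
          have hmin : ((min k n : ℕ) : ℝ) ≤ ((min l n : ℕ) : ℝ) := by
            exact_mod_cast min_le_min hkl le_rfl
          gcongr
        exact ((hypAngle_strictMono hb ha hab).le_iff_le).1 hle
      have hsum := eVariationOn.sum_le (f := γ) (n := n) humono humem
      have hterm : ∀ i ∈ Finset.range n, edist (γ (u (i + 1))) (γ (u i)) =
          ENNReal.ofReal (2 * Real.arsinh (b * Real.sin (π / n))) := by
        intro i hi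
        rw [Finset.mem_range] at hi
        rw [edist_dist, hdist (u (i + 1)) (u i)]
        have h1 : min (i + 1) n = i + 1 := min_eq_left (Nat.succ_le_of_lt hi)
        have h2 : min i n = i := min_eq_left hi.le
        have hang : (hypAngle a b (u (i + 1)) - hypAngle a b (u i)) / 2 = π / n := by
          rw [huval, huval, h1, h2]
          push_cast
          field_simp
          ring
        rw [hang, abs_of_nonneg (Real.sin_nonneg_of_nonneg_of_le_pi (by positivity)
          (div_le_self hπ.le (by exact_mod_cast hn)))]
      rw [Finset.sum_congr rfl hterm, Finset.sum_const, Finset.card_range, nsmul_eq_mul] at hsum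
      calc
        ENNReal.ofReal ((n : ℝ) * (2 * Real.arsinh (b * Real.sin (π / n)))) =
            ENNReal.ofReal ((n : ℝ)) *
              ENNReal.ofReal (2 * Real.arsinh (b * Real.sin (π / n))) :=
          ENNReal.ofReal_mul (by positivity)
        _ = (n : ℝ≥0∞) * ENNReal.ofReal (2 * Real.arsinh (b * Real.sin (π / n))) := by
          rw [ENNReal.ofReal_natCast]
        _ ≤ _ := hsum
    -- the limit
    have hreal : Tendsto (fun n : ℕ => (n : ℝ) * (2 * Real.arsinh (b * Real.sin (π / n))))
        atTop (𝓝 (2 * π * b)) := by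
      have hD : HasDerivAt (fun x : ℝ => 2 * Real.arsinh (b * Real.sin (π * x))) (2 * π * b) 0 := by
        have h1 : HasDerivAt (fun x : ℝ => π * x) π 0 := by
          simpa using (hasDerivAt_id (0:ℝ)).const_mul π
        have h2 : HasDerivAt (fun x : ℝ => Real.sin (π * x)) (Real.cos (π * 0) * π) 0 := h1.sin
        have h3 := h2.const_mul b
        have h4 := h3.arsinh
        have h5 := h4.const_mul (2:ℝ)
        refine h5.congr_deriv ?_
        norm_num
        ring
      have hslope := hasDerivAt_iff_tendsto_slope.1 hD
      have hseq : Tendsto (fun n : ℕ => (n : ℝ)⁻¹) atTop (𝓝[≠] (0:ℝ)) := by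
        apply tendsto_nhdsWithin_of_tendsto_nhds_of_eventually_within
        · exact tendsto_inv_atTop_zero.comp tendsto_natCast_atTop_atTop
        · filter_upwards [eventually_ge_atTop 1] with n hn
          have : (0:ℝ) < (n:ℝ) := by exact_mod_cast hn
          simp [this.ne']
      have := hslope.comp hseq
      refine this.congr' ?_
      filter_upwards [eventually_ge_atTop 1] with n hn
      have hn0 : (0:ℝ) < (n:ℝ) := by exact_mod_cast hn
      simp only [Function.comp_apply, slope_def_field]
      rw [show π * (n:ℝ)⁻¹ = π / n by ring]
      simp only [mul_zero, Real.sin_zero, Real.arsinh_zero, sub_zero]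
      field_simp
    have hten : Tendsto (fun n : ℕ =>
        ENNReal.ofReal ((n : ℝ) * (2 * Real.arsinh (b * Real.sin (π / n))))) atTop
        (𝓝 (ENNReal.ofReal (2 * π * b))) :=
      (ENNReal.continuous_ofReal.tendsto _).comp hreal
    exact le_of_tendsto hten (eventually_atTop.2 ⟨1, hVn⟩)
  exact le_antisymm upper lower
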